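/- arXiv:1202.0420 — 3 statements merged into one kernel-verified Lean document; each statement's English description precedes it below -/
import Mathlib

section
/- Let (P^t) be the semigroup of a continuous-time Markov process on a Polish metric space (E,d). If x, y, z are pairwise distinct points with d(x,z) = d(x,y) + d(y,z), then the coarse Ricci curvature satisfies κ(x,z) ≥ min(κ(x,y), κ(y,z)). -/
open MeasureTheory ProbabilityTheory Filter Topology Set
open scoped ENNReal NNReal

/-- The L¹ Wasserstein distance between two measures on a metric space:
infimum over all couplings (measures on `E × E` with the prescribed marginals)
of the integral of the distance. -/
noncomputable def W1 {E : Type*} [MetricSpace E] [MeasurableSpace E] (μ ν : Measure E) : ℝ≥0∞ :=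
  ⨅ (ξ : Measure (E × E)) (_ : ξ.map Prod.fst = μ ∧ ξ.map Prod.snd = ν),
    ∫⁻ p, edist p.1 p.2 ∂ξ

/-- The quantity `(1 - W₁(P_x^t, P_y^t)/d(x,y)) / t`, as an extended real number. -/
noncomputable def curvRatio {E : Type*} [MetricSpace E] [MeasurableSpace E]
    (P : ℝ → Kernel E E) (x y : E) (t : ℝ) : EReal :=
  (1 - (W1 (P t x) (P t y) : EReal) / ((ENNReal.ofReal (dist x y)) : EReal)) / (t : EReal)

/-- The coarse Ricci curvature `κ(x,y)`: the liminf as `t → 0⁺` of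
`(1 - W₁(P_x^t, P_y^t)/d(x,y)) / t`. -/
noncomputable def kappa {E : Type*} [MetricSpace E] [MeasurableSpace E]
    (P : ℝ → Kernel E E) (x y : E) : EReal :=
  Filter.liminf (curvRatio P x y) (𝓝[>] 0)

/-- The upper coarse Ricci curvature `κ̄(x,y)`: the limsup as `t → 0⁺` of
`(1 - W₁(P_x^t, P_y^t)/d(x,y)) / t`. -/
noncomputable def kappaBar {E : Type*} [MetricSpace E] [MeasurableSpace E]
    (P : ℝ → Kernel E E) (x y : E) : EReal :=
  Filter.limsup (curvRatio P x y) (𝓝[>] 0)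

/-- `P` is a Markov semigroup of transition kernels: each `P t` is a Markov kernel,
`P 0` is the identity, and the Chapman-Kolmogorov semigroup property holds. -/
def IsMarkovSemigroup {E : Type*} [MeasurableSpace E] (P : ℝ → Kernel E E) : Prop :=
  (∀ t, IsMarkovKernel (P t)) ∧ (P 0 = Kernel.id) ∧
    ∀ s t : ℝ, 0 ≤ s → 0 ≤ t → P (s + t) = (P t).comp (P s)

section Aux

variable {E : Type*} [MetricSpace E] [PolishSpace E] [MeasurableSpace E] [BorelSpace E]

private lemma isProb_of_fst_map {μ : Measure E} [IsProbabilityMeasure μ]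
    (ξ : Measure (E × E)) (h : ξ.map Prod.fst = μ) : IsProbabilityMeasure ξ := by
  constructor
  have h1 : (ξ.map Prod.fst) Set.univ = 1 := by rw [h]; exact measure_univ
  rwa [Measure.map_apply measurable_fst MeasurableSet.univ, Set.preimage_univ] at h1

private lemma glue_bound [Nonempty E] {μ ν ρ : Measure E} [IsProbabilityMeasure μ] [IsProbabilityMeasure ν]
    [IsProbabilityMeasure ρ]
    (ξ₁ ξ₂ : Measure (E × E))
    (h₁f : ξ₁.map Prod.fst = μ) (h₁s : ξ₁.map Prod.snd = ν)
    (h₂f : ξ₂.map Prod.fst = ν) (h₂s : ξ₂.map Prod.snd = ρ) :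
    W1 μ ρ ≤ (∫⁻ p, edist p.1 p.2 ∂ξ₁) + ∫⁻ p, edist p.1 p.2 ∂ξ₂ := by
  haveI := isProb_of_fst_map ξ₁ h₁f
  haveI := isProb_of_fst_map ξ₂ h₂f
  set σ : Measure (E × E) := ξ₁.map Prod.swap with hσdef
  haveI : IsProbabilityMeasure σ :=
    Measure.isProbabilityMeasure_map measurable_swap.aemeasurable
  have hσfst : σ.fst = ν := by
    rw [hσdef, Measure.fst, Measure.map_map measurable_fst measurable_swap]
    exact h₁s
  have hξ₂fst : ξ₂.fst = ν := h₂f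
  set κ₁ := σ.condKernel with hκ₁
  set κ₂ := ξ₂.condKernel with hκ₂
  have hσ : ν ⊗ₘ κ₁ = σ := by
    rw [hκ₁, ← hσfst]; exact σ.disintegrate σ.condKernel
  have hξ₂' : ν ⊗ₘ κ₂ = ξ₂ := by
    rw [hκ₂, ← hξ₂fst]; exact ξ₂.disintegrate ξ₂.condKernel
  set η : Measure (E × E × E) := ν ⊗ₘ (κ₁ ×ₖ κ₂) with hη
  set ξ : Measure (E × E) := η.map Prod.snd with hξ
  have hmeas_edist : Measurable fun p : E × E => edist p.1 p.2 := continuous_edist.measurable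
  -- first marginal of ξ
  have hξfst : ξ.map Prod.fst = μ := by
    ext s hs
    rw [Measure.map_apply measurable_fst hs, hξ,
      Measure.map_apply measurable_snd (measurable_fst hs), hη,
      Measure.compProd_apply (measurable_snd (measurable_fst hs))]
    have hbs : ∀ b : E, (Prod.mk b ⁻¹' (Prod.snd ⁻¹' (Prod.fst ⁻¹' s)) : Set (E × E))
        = Prod.fst ⁻¹' s := fun b => rfl
    simp_rw [hbs]
    have hker : ∀ b : E, (κ₁ ×ₖ κ₂) b (Prod.fst ⁻¹' s) = κ₁ b s := by
      intro b
      rw [← Set.prod_univ, Kernel.prod_apply, Measure.prod_prod, measure_univ, mul_one]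
    simp_rw [hker]
    have h1 : ∫⁻ b, κ₁ b s ∂ν = (ν ⊗ₘ κ₁) (Set.univ ×ˢ s) := by
      rw [Measure.compProd_apply_prod MeasurableSet.univ hs, setLIntegral_univ]
    rw [h1, hσ, hσdef, Measure.map_apply measurable_swap (MeasurableSet.univ.prod hs),
      Set.preimage_swap_prod, Set.prod_univ,
      ← Measure.map_apply measurable_fst hs, h₁f]
  -- second marginal of ξ
  have hξsnd : ξ.map Prod.snd = ρ := by
    ext s hs
    rw [Measure.map_apply measurable_snd hs, hξ,
      Measure.map_apply measurable_snd (measurable_snd hs), hη,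
      Measure.compProd_apply (measurable_snd (measurable_snd hs))]
    have hbs : ∀ b : E, (Prod.mk b ⁻¹' (Prod.snd ⁻¹' (Prod.snd ⁻¹' s)) : Set (E × E))
        = Prod.snd ⁻¹' s := fun b => rfl
    simp_rw [hbs]
    have hker : ∀ b : E, (κ₁ ×ₖ κ₂) b (Prod.snd ⁻¹' s) = κ₂ b s := by
      intro b
      rw [← Set.univ_prod, Kernel.prod_apply, Measure.prod_prod, measure_univ, one_mul]
    simp_rw [hker]
    have h1 : ∫⁻ b, κ₂ b s ∂ν = (ν ⊗ₘ κ₂) (Set.univ ×ˢ s) := by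
      rw [Measure.compProd_apply_prod MeasurableSet.univ hs, setLIntegral_univ]
    rw [h1, hξ₂', Set.univ_prod, ← Measure.map_apply measurable_snd hs, h₂s]
  -- the integral bound
  have hbound : ∫⁻ p, edist p.1 p.2 ∂ξ
      ≤ (∫⁻ p, edist p.1 p.2 ∂ξ₁) + ∫⁻ p, edist p.1 p.2 ∂ξ₂ := by
    have h1 : ∫⁻ p, edist p.1 p.2 ∂ξ = ∫⁻ q : E × E × E, edist q.2.1 q.2.2 ∂η := by
      rw [hξ, lintegral_map hmeas_edist measurable_snd]
    have hm0 : Measurable fun q : E × E × E => edist q.2.1 q.2.2 :=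
      hmeas_edist.comp measurable_snd
    rw [h1, hη, Measure.lintegral_compProd hm0]
    have hm1 : Measurable fun p : E × E => edist p.2 p.1 :=
      measurable_snd.edist measurable_fst
    calc ∫⁻ b, ∫⁻ q, edist q.1 q.2 ∂((κ₁ ×ₖ κ₂) b) ∂ν
        ≤ ∫⁻ b, ∫⁻ q, (edist q.1 b + edist b q.2) ∂((κ₁ ×ₖ κ₂) b) ∂ν := by
          refine lintegral_mono fun b => lintegral_mono fun q => ?_
          exact edist_triangle _ _ _
      _ = ∫⁻ b, ((∫⁻ c, edist c b ∂(κ₁ b)) + ∫⁻ e, edist b e ∂(κ₂ b)) ∂ν := by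
          refine lintegral_congr fun b => ?_
          have hmc : Measurable fun q : E × E => edist q.1 b :=
            measurable_fst.edist measurable_const
          have hmd : Measurable fun q : E × E => edist b q.2 :=
            measurable_const.edist measurable_snd
          rw [Kernel.prod_apply, lintegral_add_left hmc]
          congr 1
          · rw [MeasureTheory.lintegral_prod _ hmc.aemeasurable]
            simp
          · rw [MeasureTheory.lintegral_prod _ hmd.aemeasurable]
            simp
      _ = (∫⁻ b, ∫⁻ c, edist c b ∂(κ₁ b) ∂ν) + ∫⁻ b, ∫⁻ e, edist b e ∂(κ₂ b) ∂ν := by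
          exact lintegral_add_left
            (Measurable.lintegral_kernel_prod_right (κ := κ₁) (f := fun b c => edist c b)
              (by exact measurable_snd.edist measurable_fst)) _
      _ = (∫⁻ p : E × E, edist p.2 p.1 ∂(ν ⊗ₘ κ₁)) + ∫⁻ p : E × E, edist p.1 p.2 ∂(ν ⊗ₘ κ₂) := by
          rw [Measure.lintegral_compProd hm1, Measure.lintegral_compProd hmeas_edist]
      _ = (∫⁻ p, edist p.1 p.2 ∂ξ₁) + ∫⁻ p, edist p.1 p.2 ∂ξ₂ := by
          rw [hσ, hξ₂', hσdef, lintegral_map hm1 measurable_swap]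
          rfl
  refine le_trans ?_ hbound
  exact iInf₂_le ξ ⟨hξfst, hξsnd⟩

private lemma W1_triangle [Nonempty E] (μ ν ρ : Measure E) [IsProbabilityMeasure μ] [IsProbabilityMeasure ν]
    [IsProbabilityMeasure ρ] : W1 μ ρ ≤ W1 μ ν + W1 ν ρ := by
  conv_rhs => rw [W1, W1]
  simp_rw [ENNReal.iInf_add, ENNReal.add_iInf]
  refine le_iInf fun ξ₁ => le_iInf fun h₁ => le_iInf fun ξ₂ => le_iInf fun h₂ => ?_
  exact glue_bound ξ₁ ξ₂ h₁.1 h₁.2 h₂.1 h₂.2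

private lemma ennreal_mediant {a b c d : ℝ≥0∞} (hc0 : c ≠ 0) (hc : c ≠ ∞) (hd0 : d ≠ 0)
    (hd : d ≠ ∞) : (a + b) / (c + d) ≤ max (a / c) (b / d) := by
  have hcd0 : c + d ≠ 0 := by simp [hc0, hd0]
  have hcd : c + d ≠ ∞ := by simp [hc, hd]
  rcases le_total (a / c) (b / d) with h | h
  · rw [max_eq_right h, ENNReal.div_le_iff_le_mul (Or.inl hcd0) (Or.inl hcd)]
    calc a + b = a / c * c + b / d * d := by
          rw [ENNReal.div_mul_cancel hc0 hc, ENNReal.div_mul_cancel hd0 hd]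
      _ ≤ b / d * c + b / d * d := by gcongr
      _ = b / d * (c + d) := (mul_add _ _ _).symm
  · rw [max_eq_left h, ENNReal.div_le_iff_le_mul (Or.inl hcd0) (Or.inl hcd)]
    calc a + b = a / c * c + b / d * d := by
          rw [ENNReal.div_mul_cancel hc0 hc, ENNReal.div_mul_cancel hd0 hd]
      _ ≤ a / c * c + a / c * d := by gcongr
      _ = a / c * (c + d) := (mul_add _ _ _).symm

private lemma coe_ennreal_div' (a c : ℝ≥0∞) (hc0 : c ≠ 0) (hc : c ≠ ∞) :
    ((a / c : ℝ≥0∞) : EReal) = (a : EReal) / (c : EReal) := by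
  have hkey : ∀ x : ℝ≥0∞, x ≠ ∞ → ((x.toReal : ℝ) : EReal) = (x : EReal) := by
    intro x hx
    rw [← EReal.toReal_coe_ennreal]
    exact EReal.coe_toReal (by simp [EReal.coe_ennreal_eq_top_iff, hx])
      (EReal.coe_ennreal_ne_bot x)
  rcases eq_or_ne a ∞ with rfl | ha
  · rw [ENNReal.top_div_of_ne_top hc, EReal.coe_ennreal_top,
      EReal.top_div_of_pos_ne_top (EReal.coe_ennreal_pos.2 (pos_iff_ne_zero.2 hc0))
        (by simp [EReal.coe_ennreal_eq_top_iff, hc])]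
  · rw [← hkey _ (ENNReal.div_lt_top ha hc0).ne, ENNReal.toReal_div, EReal.coe_div,
      hkey a ha, hkey c hc]

end Aux

/-- If `x, y, z` are pairwise distinct points with
`d(x,z) = d(x,y) + d(y,z)`, then `κ(x,z) ≥ min (κ(x,y), κ(y,z))`. -/
theorem kappa_min_of_between
    {E : Type*} [MetricSpace E] [PolishSpace E] [MeasurableSpace E] [BorelSpace E]
    (P : ℝ → Kernel E E) (hP : IsMarkovSemigroup P)
    (x y z : E) (hxy : x ≠ y) (hyz : y ≠ z) (hxz : x ≠ z)
    (hd : dist x z = dist x y + dist y z) :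
    min (kappa P x y) (kappa P y z) ≤ kappa P x z := by
  haveI : Nonempty E := ⟨x⟩
  obtain ⟨hMarkov, -, -⟩ := hP
  have hdxy : (0:ℝ) < dist x y := dist_pos.2 hxy
  have hdyz : (0:ℝ) < dist y z := dist_pos.2 hyz
  set cxy := ENNReal.ofReal (dist x y) with hcxy
  set cyz := ENNReal.ofReal (dist y z) with hcyz
  set cxz := ENNReal.ofReal (dist x z) with hcxz
  have hc0xy : cxy ≠ 0 := (ENNReal.ofReal_pos.2 hdxy).ne'
  have hc0yz : cyz ≠ 0 := (ENNReal.ofReal_pos.2 hdyz).ne'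
  have hfinxy : cxy ≠ ∞ := ENNReal.ofReal_ne_top
  have hfinyz : cyz ≠ ∞ := ENNReal.ofReal_ne_top
  have hfinxz : cxz ≠ ∞ := ENNReal.ofReal_ne_top
  have hcadd : cxz = cxy + cyz := by
    rw [hcxz, hd, ENNReal.ofReal_add hdxy.le hdyz.le]
  have hc0xz : cxz ≠ 0 := by
    rw [hcadd]
    exact fun h => hc0xy (by simpa using (add_eq_zero.1 h).1)
  have hkey : ∀ t ∈ Set.Ioi (0:ℝ),
      min (curvRatio P x y t) (curvRatio P y z t) ≤ curvRatio P x z t := by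
    intro t ht
    haveI := hMarkov t
    have hW : W1 (P t x) (P t z) ≤ W1 (P t x) (P t y) + W1 (P t y) (P t z) :=
      W1_triangle _ _ _
    have hratio : W1 (P t x) (P t z) / cxz
        ≤ max (W1 (P t x) (P t y) / cxy) (W1 (P t y) (P t z) / cyz) := by
      calc W1 (P t x) (P t z) / cxz
          ≤ (W1 (P t x) (P t y) + W1 (P t y) (P t z)) / cxz :=
            ENNReal.div_le_div_right hW _
        _ ≤ _ := by
            rw [hcadd]
            exact ennreal_mediant hc0xy hfinxy hc0yz hfinyz
    have hnum : min (1 - (W1 (P t x) (P t y) : EReal) / (cxy : EReal))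
        (1 - (W1 (P t y) (P t z) : EReal) / (cyz : EReal))
        ≤ 1 - (W1 (P t x) (P t z) : EReal) / (cxz : EReal) := by
      rcases le_total (W1 (P t x) (P t y) / cxy) (W1 (P t y) (P t z) / cyz) with h | h
      · refine (min_le_right _ _).trans ?_
        refine EReal.sub_le_sub (le_refl 1) ?_
        rw [← coe_ennreal_div' _ _ hc0xz hfinxz, ← coe_ennreal_div' _ _ hc0yz hfinyz]
        exact EReal.coe_ennreal_le_coe_ennreal_iff.2 (hratio.trans_eq (max_eq_right h))
      · refine (min_le_left _ _).trans ?_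
        refine EReal.sub_le_sub (le_refl 1) ?_
        rw [← coe_ennreal_div' _ _ hc0xz hfinxz, ← coe_ennreal_div' _ _ hc0xy hfinxy]
        exact EReal.coe_ennreal_le_coe_ennreal_iff.2 (hratio.trans_eq (max_eq_left h))
    have ht' : (0:EReal) ≤ (t : EReal) := by
      exact_mod_cast (le_of_lt ht)
    unfold curvRatio
    rw [← hcxy, ← hcyz, ← hcxz]
    rcases le_total ((1 : EReal) - (W1 (P t x) (P t y) : EReal) / (cxy : EReal))
        ((1 : EReal) - (W1 (P t y) (P t z) : EReal) / (cyz : EReal)) with h | h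
    · refine (min_le_left _ _).trans ?_
      refine EReal.div_le_div_right_of_nonneg ht' ?_
      rwa [min_eq_left h] at hnum
    · refine (min_le_right _ _).trans ?_
      refine EReal.div_le_div_right_of_nonneg ht' ?_
      rwa [min_eq_right h] at hnum
  have hev : ∀ᶠ t in 𝓝[>] (0:ℝ),
      min (curvRatio P x y t) (curvRatio P y z t) ≤ curvRatio P x z t :=
    eventually_nhdsWithin_of_forall hkey
  have h1 : Filter.liminf (fun t => min (curvRatio P x y t) (curvRatio P y z t)) (𝓝[>] (0:ℝ))
      ≤ kappa P x z := liminf_le_liminf hev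
  refine le_trans ?_ h1
  rw [kappa, kappa]
  refine (le_liminf_iff (by isBoundedDefault) (by isBoundedDefault)).2 fun b hb => ?_
  obtain ⟨hb1, hb2⟩ := lt_min_iff.1 hb
  exact ((eventually_lt_of_lt_liminf hb1).and (eventually_lt_of_lt_liminf hb2)).mono
    fun t ht => lt_min ht.1 ht.2
end

section
/- Let ω be a stochastic process with left-continuous sample paths taking values in a Polish space E, and let v be a random variable independent of ω. Let φ be a measurable function and set T = φ(ω, v). Assume that for every value of v and every t ≥ 0, the indicator 𝟙_{φ(ω,v) ≤ t} depends only on the restriction ω|_{[0,t]}. Then T is a weak stopping time for the process ω, with the σ-algebra 𝒢 generated by v witnessing the definition. -/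
open MeasureTheory ProbabilityTheory Filter Topology Set
open scoped ENNReal NNReal

/-- The σ-algebra generated by a process `X` up to time `t` (the natural filtration). -/
def natFiltration {Ω E : Type*} [MeasurableSpace E] (X : ℝ → Ω → E) (t : ℝ) :
    MeasurableSpace Ω :=
  ⨆ (s : ℝ) (_ : s ∈ Set.Icc (0:ℝ) t), MeasurableSpace.comap (X s) inferInstance

/-- `T` is a weak stopping time for the process `X`, witnessed by the σ-algebra `G`:
`T` is nonnegative, `G` is independent of `ℱ_∞ = σ((ℱ_t)_{t ≥ 0})`, and `T` is a stopping
time for the enlarged filtration `𝒢_t = σ(G, ℱ_t)`. -/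
def IsWeakStoppingTime {Ω E : Type*} [MeasurableSpace Ω] [MeasurableSpace E]
    (μ : Measure Ω) (X : ℝ → Ω → E) (T : Ω → ℝ) (G : MeasurableSpace Ω) : Prop :=
  (∀ ω, 0 ≤ T ω) ∧
  Indep G (⨆ (t : ℝ) (_ : 0 ≤ t), MeasurableSpace.comap (X t) inferInstance) μ ∧
  (∀ t : ℝ, 0 ≤ t → MeasurableSet[G ⊔ natFiltration X t] {ω | T ω ≤ t})

/-- Let `X` be a process with left-continuous sample paths with values in a
Polish space, and let `v` be a random variable independent of `X`. If `T = φ(X, v)` is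
nonnegative and, for every value of `v` and every `t ≥ 0`, the indicator `𝟙_{φ(ω,v) ≤ t}`
depends only on `ω|_{[0,t]}`, then `T` is a weak stopping time for `X`, witnessed by the
σ-algebra generated by `v`. -/
theorem isWeakStoppingTime_of_depends_on_past
    {E : Type*} [MetricSpace E] [PolishSpace E] [MeasurableSpace E] [BorelSpace E]
    {Ω : Type*} [MeasurableSpace Ω] (μ : Measure Ω) [IsProbabilityMeasure μ]
    (X : ℝ → Ω → E) (hXmeas : ∀ t, Measurable (X t))
    (hXlc : ∀ ω, ∀ t : ℝ, 0 < t → Tendsto (fun s => X s ω) (𝓝[<] t) (𝓝 (X t ω)))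
    {V : Type*} [MeasurableSpace V] (v : Ω → V) (hv : Measurable v)
    (hindep : Indep (MeasurableSpace.comap v inferInstance)
      (⨆ (t : ℝ) (_ : (0:ℝ) ≤ t), MeasurableSpace.comap (X t) inferInstance) μ)
    (φ : (ℝ → E) → V → ℝ) (hφmeas : Measurable (Function.uncurry φ))
    (hφpos : ∀ p val, 0 ≤ φ p val)
    (hpast : ∀ (val : V) (t : ℝ), 0 ≤ t → ∀ p q : ℝ → E,
      (∀ s ∈ Set.Icc (0:ℝ) t, p s = q s) → (φ p val ≤ t ↔ φ q val ≤ t)) :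
    IsWeakStoppingTime μ X (fun ω => φ (fun s => X s ω) (v ω))
      (MeasurableSpace.comap v inferInstance) := by

  refine ⟨fun ω => hφpos _ _, hindep, fun t ht => ?_⟩
  classical
  set clamp : ℝ → ℝ := fun s => max 0 (min s t) with hclamp
  have hclampmem : ∀ s, clamp s ∈ Set.Icc (0:ℝ) t := fun s =>
    ⟨le_max_left _ _, max_le ht (min_le_right _ _)⟩
  have hset : {ω : Ω | φ (fun s => X s ω) (v ω) ≤ t}
      = (fun ω => φ (fun s => X (clamp s) ω) (v ω)) ⁻¹' Set.Iic t := by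
    ext ω
    simp only [Set.mem_setOf_eq, Set.mem_preimage, Set.mem_Iic]
    refine hpast (v ω) t ht _ _ (fun s hs => ?_)
    have : clamp s = s := by
      simp only [hclamp]
      rw [min_eq_left hs.2, max_eq_right hs.1]
    rw [this]
  rw [hset]
  have h1 : Measurable[natFiltration X t] (fun ω (s : ℝ) => X (clamp s) ω) := by
    rw [measurable_iff_comap_le, MeasurableSpace.pi, MeasurableSpace.comap_iSup]
    refine iSup_le fun s => ?_
    rw [MeasurableSpace.comap_comp]
    exact le_iSup₂ (f := fun u (_ : u ∈ Set.Icc (0:ℝ) t) =>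
      MeasurableSpace.comap (X u) inferInstance) (clamp s) (hclampmem s)
  have h2 : Measurable[MeasurableSpace.comap v inferInstance] v :=
    Measurable.of_comap_le le_rfl
  have hmeas : Measurable[MeasurableSpace.comap v inferInstance ⊔ natFiltration X t]
      (fun ω => φ (fun s => X (clamp s) ω) (v ω)) :=
    hφmeas.comp ((h1.mono le_sup_right le_rfl).prodMk (h2.mono le_sup_left le_rfl))
  exact hmeas measurableSet_Iic
end

section
/- Let S be a bounded self-adjoint operator on a real or complex Hilbert space H, let x ∈ H with x ≠ 0, and let n be a natural number. Then ‖Sx‖/‖x‖ ≤ (‖S^{2^n} x‖/‖x‖)^{1/2^n}, where S^{2^n} denotes the 2^n-fold composition of S with itself. -/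
open scoped ENNReal NNReal

open RCLike in
private lemma key_sq_le {𝕜 H : Type*} [RCLike 𝕜] [NormedAddCommGroup H]
    [InnerProductSpace 𝕜 H] [CompleteSpace H] (S : H →L[𝕜] H) (hS : IsSelfAdjoint S)
    (x : H) : ‖S x‖ ^ 2 ≤ ‖(S ^ 2) x‖ * ‖x‖ := by
  have h1 : (‖S x‖ : ℝ) ^ 2 = re (inner 𝕜 x (S (S x))) := by
    have h0 : (inner 𝕜 (S x) (S x)) = inner 𝕜 x (S (S x)) := hS.isSymmetric x (S x)
    rw [← h0]
    exact (inner_self_eq_norm_sq _).symm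
  have h2 : re (inner 𝕜 x (S (S x))) ≤ ‖x‖ * ‖S (S x)‖ :=
    (RCLike.re_le_norm _).trans (norm_inner_le_norm (𝕜 := 𝕜) x (S (S x)))
  have h3 : (S ^ 2) x = S (S x) := by simp [pow_two]
  rw [h3, h1, mul_comm]; exact h2

/-- For a bounded self-adjoint operator `S` on a (real or complex) Hilbert
space `H` and `x ≠ 0`, one has `‖Sx‖/‖x‖ ≤ (‖S^{2^n} x‖/‖x‖)^{1/2^n}` for every `n`. -/
theorem norm_apply_div_le_pow_selfAdjoint
    {𝕜 H : Type*} [RCLike 𝕜] [NormedAddCommGroup H] [InnerProductSpace 𝕜 H]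
    [CompleteSpace H] (S : H →L[𝕜] H) (hS : IsSelfAdjoint S)
    (x : H) (hx : x ≠ 0) (n : ℕ) :
    ‖S x‖ / ‖x‖ ≤ (‖(S ^ 2 ^ n) x‖ / ‖x‖) ^ ((1 : ℝ) / 2 ^ n) := by
  induction n generalizing S with
  | zero => simp
  | succ n ih =>
    have hxpos : (0 : ℝ) < ‖x‖ := norm_pos_iff.mpr hx
    -- step: ‖Sx‖/‖x‖ ≤ (‖S²x‖/‖x‖)^(1/2)
    have hstep : ‖S x‖ / ‖x‖ ≤ (‖(S ^ 2) x‖ / ‖x‖) ^ ((2 : ℝ)⁻¹) := by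
      rw [Real.le_rpow_inv_iff_of_pos (by positivity) (by positivity) (by norm_num)]
      rw [show ((2:ℝ)) = ((2:ℕ):ℝ) by norm_num, Real.rpow_natCast, div_pow,
        div_le_div_iff₀ (by positivity) (by positivity)]
      have := key_sq_le S hS x
      nlinarith [norm_nonneg x, norm_nonneg (S x)]
    have hIH := ih (S ^ 2) (hS.pow 2)
    have hpow : (S ^ 2) ^ 2 ^ n = S ^ 2 ^ (n + 1) := by
      rw [← pow_mul, pow_succ, mul_comm]
    rw [hpow] at hIH
    have hmono := Real.rpow_le_rpow (by positivity) hIH (by norm_num : (0:ℝ) ≤ (2:ℝ)⁻¹)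
    calc ‖S x‖ / ‖x‖ ≤ (‖(S ^ 2) x‖ / ‖x‖) ^ ((2 : ℝ)⁻¹) := hstep
      _ ≤ ((‖(S ^ 2 ^ (n+1)) x‖ / ‖x‖) ^ ((1:ℝ) / 2 ^ n)) ^ ((2 : ℝ)⁻¹) := hmono
      _ = (‖(S ^ 2 ^ (n+1)) x‖ / ‖x‖) ^ ((1:ℝ) / 2 ^ (n+1)) := by
          rw [← Real.rpow_mul (by positivity)]; congr 1; rw [pow_succ]; field_simp
end
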